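/- For μ ∈ (0,1) and any probability distribution p on ℕ with mean μ, the Gini index satisfies G[p] − (1−μ) ≤ 3·(μ − 1 + p₀). -/
import Mathlib


/-- For μ ∈ (0,1) and any probability distribution p on ℕ with mean μ, the Gini index
satisfies `G[p] − (1−μ) ≤ 3·(μ − 1 + p₀)`. -/
theorem stmt_5 (μ : ℝ) (hμ0 : 0 < μ) (hμ1 : μ < 1) (p : ℕ → ℝ) (hpos : ∀ n, 0 ≤ p n)
    (hsum : Summable p) (hmom : Summable (fun n : ℕ => (n : ℝ) * p n))
    (h1 : ∑' n, p n = 1) (h2 : ∑' n : ℕ, (n : ℝ) * p n = μ)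
    (hG : Summable (fun ij : ℕ × ℕ => |(ij.1 : ℝ) - (ij.2 : ℝ)| * p ij.1 * p ij.2)) :
    (1 / (2 * μ)) * (∑' i : ℕ, ∑' j : ℕ, |(i : ℝ) - (j : ℝ)| * p i * p j) - (1 - μ)
      ≤ 3 * (μ - 1 + p 0) := by
  -- set up truncated distribution q
  set q : ℕ → ℝ := fun n => if n = 0 then 0 else p n with hq_def
  have hqpos : ∀ n, 0 ≤ q n := by
    intro n; simp only [hq_def]; split <;> simp [hpos]
  have hqle : ∀ n, q n ≤ p n := by
    intro n; simp only [hq_def]; split <;> simp [hpos]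
  have hqsum : Summable q := Summable.of_nonneg_of_le hqpos hqle hsum
  have hqtsum : ∑' n, q n = 1 - p 0 := by
    have := Summable.tsum_eq_add_tsum_ite hsum 0
    rw [h1] at this
    simp only [hq_def]
    linarith [this]
  -- r = 1 - p 0
  have hqlemom : ∀ n, q n ≤ (n : ℝ) * p n := by
    intro n
    simp only [hq_def]
    cases n with
    | zero => simp
    | succ k =>
      simp only [Nat.succ_ne_zero, if_false]
      have h1n : (1 : ℝ) ≤ (k + 1 : ℕ) := by exact_mod_cast Nat.one_le_iff_ne_zero.mpr (Nat.succ_ne_zero k)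
      nlinarith [hpos (k + 1)]
  have hr_le : 1 - p 0 ≤ μ := by
    rw [← hqtsum, ← h2]
    exact Summable.tsum_le_tsum hqlemom hqsum hmom
  have hp0le1 : p 0 ≤ 1 := by
    rw [← h1]
    exact Summable.le_tsum hsum 0 (fun n _ => hpos n)
  -- summability of the pieces
  have hA : Summable (fun ij : ℕ × ℕ => (ij.1 : ℝ) * p ij.1 * p ij.2) := by
    have := (hmom.mul_of_nonneg hsum
      (fun n => mul_nonneg (Nat.cast_nonneg n) (hpos n)) hpos)
    exact this.congr (fun ij => by ring)
  have hB : Summable (fun ij : ℕ × ℕ => (ij.2 : ℝ) * p ij.1 * p ij.2) := by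
    have := (hsum.mul_of_nonneg hmom hpos
      (fun n => mul_nonneg (Nat.cast_nonneg n) (hpos n)))
    exact this.congr (fun ij => by ring)
  have hC : Summable (fun ij : ℕ × ℕ => q ij.1 * q ij.2) :=
    hqsum.mul_of_nonneg hqsum hqpos hqpos
  -- the majorant
  have hF : Summable (fun ij : ℕ × ℕ =>
      ((ij.1 : ℝ) + ij.2) * p ij.1 * p ij.2 - 2 * (q ij.1 * q ij.2)) := by
    have := (hA.add hB).sub (hC.mul_left 2)
    exact this.congr (fun ij => by ring)
  -- pointwise bound
  have hpt : ∀ ij : ℕ × ℕ, |(ij.1 : ℝ) - (ij.2 : ℝ)| * p ij.1 * p ij.2 ≤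
      ((ij.1 : ℝ) + ij.2) * p ij.1 * p ij.2 - 2 * (q ij.1 * q ij.2) := by
    rintro ⟨i, j⟩
    simp only [hq_def]
    rcases Nat.eq_zero_or_pos i with hi | hi
    · subst hi
      simp only [Nat.cast_zero, if_true, zero_mul, mul_zero]
      rw [abs_sub_comm, sub_zero, abs_of_nonneg (Nat.cast_nonneg j)]
      ring_nf
      simp
    rcases Nat.eq_zero_or_pos j with hj | hj
    · subst hj
      simp only [Nat.cast_zero, if_true, mul_zero]
      rw [sub_zero, abs_of_nonneg (Nat.cast_nonneg i)]
      ring_nf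
      simp
    · have hi1 : (1 : ℝ) ≤ i := by exact_mod_cast hi
      have hj1 : (1 : ℝ) ≤ j := by exact_mod_cast hj
      have habs : |(i : ℝ) - j| ≤ (i : ℝ) + j - 2 := by
        rw [abs_le]; constructor <;> linarith
      have hij0 : i ≠ 0 := Nat.pos_iff_ne_zero.mp hi
      have hij1 : j ≠ 0 := Nat.pos_iff_ne_zero.mp hj
      simp only [hij0, hij1, if_false]
      have hpp : 0 ≤ p i * p j := mul_nonneg (hpos i) (hpos j)
      nlinarith [habs, hpp, abs_nonneg ((i : ℝ) - j)]
  -- sum bound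
  have hSle : (∑' ij : ℕ × ℕ, |(ij.1 : ℝ) - (ij.2 : ℝ)| * p ij.1 * p ij.2) ≤
      ∑' ij : ℕ × ℕ, (((ij.1 : ℝ) + ij.2) * p ij.1 * p ij.2 - 2 * (q ij.1 * q ij.2)) :=
    Summable.tsum_le_tsum hpt hG hF
  -- compute the majorant sum
  have hAval : (∑' ij : ℕ × ℕ, (ij.1 : ℝ) * p ij.1 * p ij.2) = μ := by
    rw [Summable.tsum_prod hA]
    have : ∀ i : ℕ, (∑' j : ℕ, (i : ℝ) * p i * p j) = (i : ℝ) * p i := by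
      intro i; rw [tsum_mul_left, h1, mul_one]
    rw [tsum_congr this, h2]
  have hBval : (∑' ij : ℕ × ℕ, (ij.2 : ℝ) * p ij.1 * p ij.2) = μ := by
    rw [Summable.tsum_prod hB]
    have : ∀ i : ℕ, (∑' j : ℕ, (j : ℝ) * p i * p j) = p i * μ := by
      intro i
      have : (∑' j : ℕ, (j : ℝ) * p i * p j) = ∑' j : ℕ, p i * ((j : ℝ) * p j) :=
        tsum_congr (fun j => by ring)
      rw [this, tsum_mul_left, h2]
    rw [tsum_congr this, tsum_mul_right, h1, one_mul]
  have hCval : (∑' ij : ℕ × ℕ, q ij.1 * q ij.2) = (1 - p 0) * (1 - p 0) := by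
    rw [Summable.tsum_prod hC]
    have : ∀ i : ℕ, (∑' j : ℕ, q i * q j) = q i * (1 - p 0) := by
      intro i; rw [tsum_mul_left, hqtsum]
    rw [tsum_congr this, tsum_mul_right, hqtsum]
  have hFval : (∑' ij : ℕ × ℕ,
      (((ij.1 : ℝ) + ij.2) * p ij.1 * p ij.2 - 2 * (q ij.1 * q ij.2)))
      = 2 * μ - 2 * ((1 - p 0) * (1 - p 0)) := by
    have hsplit : (fun ij : ℕ × ℕ =>
        ((ij.1 : ℝ) + ij.2) * p ij.1 * p ij.2 - 2 * (q ij.1 * q ij.2))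
        = fun ij : ℕ × ℕ => ((ij.1 : ℝ) * p ij.1 * p ij.2 + (ij.2 : ℝ) * p ij.1 * p ij.2)
          - 2 * (q ij.1 * q ij.2) := by
      funext ij; ring
    rw [hsplit, Summable.tsum_sub (hA.add hB) (hC.mul_left 2), Summable.tsum_add hA hB,
      hAval, hBval, tsum_mul_left, hCval]
    ring
  -- relate iterated sum to product sum
  have hiter : (∑' i : ℕ, ∑' j : ℕ, |(i : ℝ) - (j : ℝ)| * p i * p j)
      = ∑' ij : ℕ × ℕ, |(ij.1 : ℝ) - (ij.2 : ℝ)| * p ij.1 * p ij.2 := (Summable.tsum_prod hG).symm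
  rw [hiter]
  set S := ∑' ij : ℕ × ℕ, |(ij.1 : ℝ) - (ij.2 : ℝ)| * p ij.1 * p ij.2 with hS
  have hSbound : S ≤ 2 * μ - 2 * ((1 - p 0) * (1 - p 0)) := by
    rw [hS]; calc _ ≤ _ := hSle
    _ = _ := hFval
  -- final arithmetic
  have h2μ : 0 < 2 * μ := by linarith
  rw [sub_le_iff_le_add, one_div, inv_mul_le_iff₀ h2μ]
  set r := 1 - p 0 with hr
  have hr0 : 0 ≤ r := by rw [hr]; linarith
  nlinarith [mul_nonneg (by linarith : (0:ℝ) ≤ 2 * μ - r) (by linarith : (0:ℝ) ≤ μ - r)]
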